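/- Let 0 < r < R and define G(x) = R·g(x/R) - r·g(x/r) for 0 ≤ x ≤ r and G(x) = R·g(x/R) for r ≤ x ≤ R, where g(x) = (√(1-x²) - x·arccos(x))/π. Then the area of the region D = {(x,y) : 0 ≤ x ≤ R, 0 ≤ y ≤ G(x)}, i.e., ∫_0^R G(x) dx, equals (R² - r²)/8. -/

import Mathlib

noncomputable def g (x : ℝ) : ℝ := (Real.sqrt (1 - x^2) - x * Real.arccos x) / Real.pi

noncomputable def G (r R x : ℝ) : ℝ :=
  if x ≤ r then R * g (x / R) - r * g (x / r) else R * g (x / R)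

open Real intervalIntegral

noncomputable def gAnti (x : ℝ) : ℝ :=
  (3 * x * Real.sqrt (1 - x^2) + Real.arcsin x - 2 * x^2 * Real.arccos x) / (4 * Real.pi)

lemma g_cont : Continuous g := by
  unfold g
  exact ((Real.continuous_sqrt.comp (by continuity)).sub
    (continuous_id.mul Real.continuous_arccos)).div_const _

lemma gAnti_deriv {x : ℝ} (h₁ : -1 < x) (h₂ : x < 1) : HasDerivAt gAnti (g x) x := by
  have hpos : 0 < 1 - x ^ 2 := by nlinarith
  have hs : Real.sqrt (1 - x ^ 2) ≠ 0 := by positivity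
  have hsq : Real.sqrt (1 - x ^ 2) ^ 2 = 1 - x ^ 2 := Real.sq_sqrt hpos.le
  have hinner : HasDerivAt (fun x : ℝ => 1 - x ^ 2) (-(2 * x)) x := by
    simpa using ((hasDerivAt_pow 2 x).const_sub 1)
  have hsqrt : HasDerivAt (fun x : ℝ => Real.sqrt (1 - x ^ 2))
      (-(2 * x) / (2 * Real.sqrt (1 - x ^ 2))) x := by
    have := (Real.hasDerivAt_sqrt hpos.ne').comp x hinner
    exact this.congr_deriv (by ring)
  have harcsin : HasDerivAt Real.arcsin (1 / Real.sqrt (1 - x ^ 2)) x :=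
    Real.hasDerivAt_arcsin (by linarith) (by linarith)
  have harccos : HasDerivAt Real.arccos (-(1 / Real.sqrt (1 - x ^ 2))) x :=
    Real.hasDerivAt_arccos (by linarith) (by linarith)
  have h3 : HasDerivAt (fun x : ℝ => 3 * x * Real.sqrt (1 - x ^ 2))
      (3 * Real.sqrt (1 - x ^ 2) + 3 * x * (-(2 * x) / (2 * Real.sqrt (1 - x ^ 2)))) x := by
    have := ((hasDerivAt_id x).const_mul 3).mul hsqrt
    exact this.congr_deriv (by simp)
  have h4 : HasDerivAt (fun x : ℝ => 2 * x ^ 2 * Real.arccos x)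
      (2 * (2 * x) * Real.arccos x + 2 * x ^ 2 * (-(1 / Real.sqrt (1 - x ^ 2)))) x := by
    have := ((hasDerivAt_pow 2 x).const_mul 2).mul harccos
    exact this.congr_deriv (by norm_num)
  have hsum := ((h3.add harcsin).sub h4).div_const (4 * Real.pi)
  refine hsum.congr_deriv (Eq.symm ?_)
  unfold g
  have hpi : Real.pi ≠ 0 := Real.pi_ne_zero
  field_simp
  linear_combination hsq

lemma integral_g : ∫ x in (0:ℝ)..1, g x = 1 / 8 := by
  have h := intervalIntegral.integral_eq_sub_of_hasDeriv_right_of_le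
    (f := gAnti) (f' := g) (by norm_num : (0:ℝ) ≤ 1)
    (by
      apply Continuous.continuousOn
      unfold gAnti
      exact ((((continuous_const.mul continuous_id).mul
        (Real.continuous_sqrt.comp (by continuity))).add Real.continuous_arcsin).sub
        ((continuous_const.mul (continuous_pow 2)).mul Real.continuous_arccos)).div_const _)
    (fun x hx => by
      have := gAnti_deriv (by linarith [hx.1] : -1 < x) hx.2
      exact this.hasDerivWithinAt)
    (g_cont.intervalIntegrable 0 1)
  rw [h]
  unfold gAnti
  simp [Real.arcsin_one, Real.arccos_one, Real.arcsin_zero]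
  field_simp
  ring

lemma integral_scaled (c : ℝ) (hc : 0 < c) :
    ∫ x in (0:ℝ)..c, c * g (x / c) = c ^ 2 / 8 := by
  rw [intervalIntegral.integral_const_mul, intervalIntegral.integral_comp_div (f := g) hc.ne']
  simp only [zero_div, div_self hc.ne']
  rw [integral_g]
  simp [smul_eq_mul]
  ring

theorem area_under_G (r R : ℝ) (hr : 0 < r) (hR : r < R) :
    ∫ x in (0:ℝ)..R, G r R x = (R^2 - r^2) / 8 := by
  have hR0 : 0 < R := hr.trans hR
  have hg1 : g 1 = 0 := by
    unfold g
    simp [Real.arccos_one]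
  have hcontG1 : Continuous (fun x => R * g (x / R)) :=
    continuous_const.mul (g_cont.comp (continuous_id.div_const R))
  have hcontG2 : Continuous (fun x => r * g (x / r)) :=
    continuous_const.mul (g_cont.comp (continuous_id.div_const r))
  have hcontG1' : Continuous (fun x => R * g (x / R) - r * g (x / r)) := hcontG1.sub hcontG2
  have hGcont : Continuous (G r R) := by
    unfold G
    exact Continuous.if_le hcontG1' hcontG1 continuous_id continuous_const
      (fun x hx => by simp [hx, div_self hr.ne', hg1])
  have e1 : ∫ x in (0:ℝ)..r, G r R x
      = (∫ x in (0:ℝ)..r, R * g (x / R)) - ∫ x in (0:ℝ)..r, r * g (x / r) := by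
    rw [← intervalIntegral.integral_sub (hcontG1.intervalIntegrable 0 r)
      (hcontG2.intervalIntegrable 0 r)]
    apply intervalIntegral.integral_congr
    intro x hx
    rw [Set.uIcc_of_le hr.le] at hx
    unfold G
    simp [if_pos hx.2]
  have e2 : ∫ x in r..R, G r R x = ∫ x in r..R, R * g (x / R) := by
    apply intervalIntegral.integral_congr
    intro x hx
    rw [Set.uIcc_of_le hR.le] at hx
    unfold G
    by_cases h : x ≤ r
    · have hxr : x = r := le_antisymm h hx.1
      simp [h, hxr, div_self hr.ne', hg1]
    · simp [h]
  have e3 : (∫ x in (0:ℝ)..r, R * g (x / R)) + ∫ x in r..R, R * g (x / R)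
      = ∫ x in (0:ℝ)..R, R * g (x / R) :=
    intervalIntegral.integral_add_adjacent_intervals
      (hcontG1.intervalIntegrable 0 r) (hcontG1.intervalIntegrable r R)
  have split : ∫ x in (0:ℝ)..R, G r R x =
      (∫ x in (0:ℝ)..r, G r R x) + ∫ x in r..R, G r R x :=
    (intervalIntegral.integral_add_adjacent_intervals
      (hGcont.intervalIntegrable 0 r) (hGcont.intervalIntegrable r R)).symm
  rw [split, e1, e2, sub_add_eq_add_sub, e3,
    integral_scaled R hR0, integral_scaled r hr]
  ring
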